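/- Define I₃ : ℝ → ℝ → ℝ by I₃(q, θ) := q · (1 − h₂((1 + sin(2θ))/2)) + (1−q) · sin²θ · Real.logb 2 (sin²θ) − (q·cos²θ + sin²θ) · Real.logb 2 (q·cos²θ + sin²θ) − (1−q) · cos²θ · Real.logb 2 (1−q). Then for every q ∈ (0,1) and θ ∈ (0, π/4) ∪ (π/4, π/2), the function θ' ↦ I₃(q, θ') has derivative at θ equal to q · cos(2θ) · Real.logb 2 ((1 + sin(2θ))/(1 − sin(2θ))) + (1−q) · sin(2θ) · Real.logb 2 ((1−q)·sin²θ / (q·cos²θ + sin²θ)). -/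

import Mathlib

/-- The binary entropy function (in bits), with the convention `Real.logb 2 0 = 0`. -/
noncomputable def h2 (x : ℝ) : ℝ := -x * Real.logb 2 x - (1 - x) * Real.logb 2 (1 - x)

/-- Accessible information of the one-sender coherence-assisted encoding in the
measurement regime σ = 1/2 (Eq. acc-info-reg-3 of the paper). -/
noncomputable def I3 (q θ : ℝ) : ℝ :=
  q * (1 - h2 ((1 + Real.sin (2 * θ)) / 2))
    + (1 - q) * Real.sin θ ^ 2 * Real.logb 2 (Real.sin θ ^ 2)
    - (q * Real.cos θ ^ 2 + Real.sin θ ^ 2) * Real.logb 2 (q * Real.cos θ ^ 2 + Real.sin θ ^ 2)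
    - (1 - q) * Real.cos θ ^ 2 * Real.logb 2 (1 - q)

lemma hasDerivAt_logb2 {f : ℝ → ℝ} {f' x : ℝ} (hf : HasDerivAt f f' x) (hx : f x ≠ 0) :
    HasDerivAt (fun y => Real.logb 2 (f y)) (f' / (f x * Real.log 2)) x := by
  simpa [Real.logb, div_div] using (hf.log hx).div_const (Real.log 2)

lemma hasDerivAt_h2 {x : ℝ} (hx0 : x ≠ 0) (hx1 : (1 : ℝ) - x ≠ 0) :
    HasDerivAt h2 (Real.logb 2 (1 - x) - Real.logb 2 x) x := by
  have hL : Real.log 2 ≠ 0 := (Real.log_pos (by norm_num)).ne'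
  have h1 : HasDerivAt (fun y : ℝ => Real.logb 2 y) (1 / (x * Real.log 2)) x := by
    simpa using hasDerivAt_logb2 (hasDerivAt_id x) hx0
  have h2' : HasDerivAt (fun y : ℝ => (1 : ℝ) - y) (-1) x := (hasDerivAt_id x).const_sub 1
  have h3 := hasDerivAt_logb2 h2' hx1
  have hA := ((hasDerivAt_id x).neg.mul h1)
  have hB := h2'.mul h3
  have H := hA.sub hB
  have hD : -1 * Real.logb 2 x + -id x * (1 / (x * Real.log 2)) -
      (-1 * Real.logb 2 (1 - x) + (1 - x) * (-1 / ((1 - x) * Real.log 2))) =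
      Real.logb 2 (1 - x) - Real.logb 2 x := by
    simp only [id]
    field_simp
    ring
  rw [← hD]
  exact H

theorem hasDerivAt_I3_theta (q θ : ℝ) (hq : q ∈ Set.Ioo (0 : ℝ) 1)
    (hθ : θ ∈ Set.Ioo (0 : ℝ) (Real.pi / 4) ∪ Set.Ioo (Real.pi / 4) (Real.pi / 2)) :
    HasDerivAt (fun θ' => I3 q θ')
      (q * Real.cos (2 * θ) *
          Real.logb 2 ((1 + Real.sin (2 * θ)) / (1 - Real.sin (2 * θ)))
        + (1 - q) * Real.sin (2 * θ) *
          Real.logb 2 ((1 - q) * Real.sin θ ^ 2 / (q * Real.cos θ ^ 2 + Real.sin θ ^ 2))) θ := by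
  obtain ⟨hq0, hq1⟩ := hq
  have hpi := Real.pi_pos
  -- basic range facts
  have hθ0 : 0 < θ := by rcases hθ with h | h <;> [exact h.1; linarith [h.1]]
  have hθ2 : θ < Real.pi / 2 := by rcases hθ with h | h <;> [linarith [h.2]; exact h.2]
  have hs : 0 < Real.sin θ := Real.sin_pos_of_pos_of_lt_pi hθ0 (by linarith)
  have hc : 0 < Real.cos θ := Real.cos_pos_of_mem_Ioo ⟨by linarith, hθ2⟩
  have hne : Real.sin θ ≠ Real.cos θ := by
    have hmono := Real.strictMonoOn_sin
    rcases hθ with h | h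
    · have : Real.sin θ < Real.sin (Real.pi / 2 - θ) := by
        apply hmono ⟨by linarith, by linarith⟩ ⟨by linarith [h.2], by linarith⟩
        linarith [h.2]
      rw [Real.sin_pi_div_two_sub] at this
      exact ne_of_lt this
    · have : Real.sin (Real.pi / 2 - θ) < Real.sin θ := by
        apply hmono ⟨by linarith, by linarith [h.1]⟩ ⟨by linarith, by linarith⟩
        linarith [h.1]
      rw [Real.sin_pi_div_two_sub] at this
      exact (ne_of_lt this).symm
  have hL : Real.log 2 ≠ 0 := (Real.log_pos (by norm_num)).ne'
  have hpyth := Real.sin_sq_add_cos_sq θ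
  have hdiff : (Real.cos θ - Real.sin θ) ^ 2 > 0 :=
    sq_pos_of_ne_zero (sub_ne_zero.mpr (Ne.symm hne))
  have h1m : 0 < 1 - Real.sin (2 * θ) := by
    rw [Real.sin_two_mul]; nlinarith
  have h1p : 0 < 1 + Real.sin (2 * θ) := by
    rw [Real.sin_two_mul]; nlinarith
  have hu_pos : 0 < Real.sin θ ^ 2 := by positivity
  have hv_pos : 0 < q * Real.cos θ ^ 2 + Real.sin θ ^ 2 := by positivity
  have hq1' : (1 : ℝ) - q ≠ 0 := by linarith
  -- derivatives of the inner functions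
  have hsin2 : HasDerivAt (fun y : ℝ => Real.sin (2 * y)) (Real.cos (2 * θ) * 2) θ :=
    (Real.hasDerivAt_sin (2 * θ)).comp θ (by simpa using (hasDerivAt_id θ).const_mul 2)
  have hS : HasDerivAt (fun y : ℝ => (1 + Real.sin (2 * y)) / 2) (Real.cos (2 * θ) * 2 / 2) θ :=
    (hsin2.const_add 1).div_const 2
  have hu : HasDerivAt (fun y : ℝ => Real.sin y ^ 2)
      (2 * Real.sin θ ^ 1 * Real.cos θ) θ := (Real.hasDerivAt_sin θ).pow 2
  have hcos2 : HasDerivAt (fun y : ℝ => Real.cos y ^ 2)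
      (2 * Real.cos θ ^ 1 * (-Real.sin θ)) θ := (Real.hasDerivAt_cos θ).pow 2
  have hv : HasDerivAt (fun y : ℝ => q * Real.cos y ^ 2 + Real.sin y ^ 2)
      (q * (2 * Real.cos θ ^ 1 * (-Real.sin θ)) + 2 * Real.sin θ ^ 1 * Real.cos θ) θ :=
    (hcos2.const_mul q).add hu
  -- the four terms of I3
  have hSx0 : (1 + Real.sin (2 * θ)) / 2 ≠ 0 := by positivity
  have hSx1 : (1 : ℝ) - (1 + Real.sin (2 * θ)) / 2 ≠ 0 := by
    have : (1 : ℝ) - (1 + Real.sin (2 * θ)) / 2 = (1 - Real.sin (2 * θ)) / 2 := by ring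
    rw [this]; positivity
  have hF1 : HasDerivAt (fun y => q * (1 - h2 ((1 + Real.sin (2 * y)) / 2)))
      (q * (-((Real.logb 2 (1 - (1 + Real.sin (2 * θ)) / 2) -
        Real.logb 2 ((1 + Real.sin (2 * θ)) / 2)) * (Real.cos (2 * θ) * 2 / 2)))) θ :=
    by have := (((hasDerivAt_h2 hSx0 hSx1).comp θ hS).const_sub 1).const_mul q; exact this
  have hlogu := hasDerivAt_logb2 hu hu_pos.ne'
  have hF2 := (hu.const_mul (1 - q)).mul hlogu
  have hlogv := hasDerivAt_logb2 hv hv_pos.ne'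
  have hF3 := hv.mul hlogv
  have hF4 := (hcos2.const_mul (1 - q)).mul_const (Real.logb 2 (1 - q))
  have H := ((hF1.add hF2).sub hF3).sub hF4
  have hI : HasDerivAt (fun θ' => I3 q θ') _ θ := H
  convert hI using 1
  -- now prove the derivative identity
  have e1 : (1 : ℝ) - (1 + Real.sin (2 * θ)) / 2 = (1 - Real.sin (2 * θ)) / 2 := by ring
  rw [e1, Real.logb_div h1p.ne' h1m.ne',
    Real.logb_div (by positivity) (two_ne_zero), Real.logb_div (by positivity) (two_ne_zero),
    Real.logb_div (mul_ne_zero hq1' hu_pos.ne') hv_pos.ne',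
    Real.logb_mul hq1' hu_pos.ne', Real.sin_two_mul]
  field_simp
  ring
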